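/- The state-independent disturbance satisfies the upper bound η(𝒜',ℬ) ≤ max_{1≤i≤d} √( (1 − 1/d) · (1 − Σ_{k=1}^d |⟨a'_k, b_i⟩|⁴) ). -/

import Mathlib

open scoped ComplexInnerProductSpace

noncomputable section

variable {H : Type*} [NormedAddCommGroup H] [InnerProductSpace ℂ H] [FiniteDimensional ℂ H]
variable {ι ι' : Type*} [Fintype ι] [Fintype ι']

/-- The rank-one projector `|v⟩⟨v|`. -/
def ketbra (v : H) : H →ₗ[ℂ] H where
  toFun x := ⟪v, x⟫ • v
  map_add' x y := by simp [inner_add_right, add_smul]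
  map_smul' c x := by simp [inner_smul_right, mul_smul]

/-- A density operator: self-adjoint, positive semidefinite, trace one. -/
def IsDensity (ρ : H →ₗ[ℂ] H) : Prop :=
  LinearMap.IsSymmetric ρ ∧ (∀ x : H, 0 ≤ (⟪x, ρ x⟫).re) ∧
    LinearMap.trace ℂ H ρ = 1

/-- The state-dependent error `ε_ρ(𝒜,𝒜')`. -/
def sdError (a a' : ι → H) (ρ : H →ₗ[ℂ] H) : ℝ :=
  ⨆ i : ι, ‖LinearMap.trace ℂ H (ρ ∘ₗ (ketbra (a i) - ketbra (a' i)))‖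

/-- The state-independent error `ε(𝒜,𝒜')`. -/
def siError (a a' : ι → H) : ℝ :=
  ⨆ ρ : {ρ : H →ₗ[ℂ] H // IsDensity ρ}, sdError a a' ρ.1

/-- The operator `|b_i⟩⟨b_i| − Σ_j |⟨a'_j, b_i⟩|² |a'_j⟩⟨a'_j|`. -/
def distOp (a' : ι' → H) (b : ι → H) (i : ι) : H →ₗ[ℂ] H :=
  ketbra (b i) - ∑ j : ι', (‖⟪a' j, b i⟫‖ ^ 2 : ℂ) • ketbra (a' j)

/-- The state-dependent disturbance `η_ρ(𝒜',ℬ)`. -/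
def sdDist (a' : ι' → H) (b : ι → H) (ρ : H →ₗ[ℂ] H) : ℝ :=
  ⨆ i : ι, ‖LinearMap.trace ℂ H (ρ ∘ₗ distOp a' b i)‖

/-- The state-independent disturbance `η(𝒜',ℬ)`. -/
def siDist (a' : ι' → H) (b : ι → H) : ℝ :=
  ⨆ ρ : {ρ : H →ₗ[ℂ] H // IsDensity ρ}, sdDist a' b ρ.1

/-- The state-independent overall error `Δ(𝒜,𝒜',ℬ)`. -/
def siOverall (a a' b : ι → H) : ℝ :=
  ⨆ ρ : {ρ : H →ₗ[ℂ] H // IsDensity ρ}, (sdError a a' ρ.1 + sdDist a' b ρ.1)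

set_option linter.unusedSectionVars false

lemma ketbra_apply (v x : H) : ketbra v x = ⟪v, x⟫ • v := rfl

lemma trace_eq_sum_inner {n : Type*} [Fintype n] (c : OrthonormalBasis n ℂ H) (f : H →ₗ[ℂ] H) :
    LinearMap.trace ℂ H f = ∑ k, ⟪c k, f (c k)⟫ := by
  classical
  rw [LinearMap.trace_eq_matrix_trace ℂ c.toBasis f]
  simp only [Matrix.trace, Matrix.diag, LinearMap.toMatrix_apply, OrthonormalBasis.coe_toBasis,
    OrthonormalBasis.coe_toBasis_repr_apply, OrthonormalBasis.repr_apply_apply]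

lemma trace_comp_ketbra (T : H →ₗ[ℂ] H) (v : H) :
    LinearMap.trace ℂ H (T ∘ₗ ketbra v) = ⟪v, T v⟫ := by
  rw [trace_eq_sum_inner (stdOrthonormalBasis ℂ H)]
  have h : ∀ k, ⟪stdOrthonormalBasis ℂ H k, (T ∘ₗ ketbra v) (stdOrthonormalBasis ℂ H k)⟫
      = ⟪v, stdOrthonormalBasis ℂ H k⟫ * ⟪stdOrthonormalBasis ℂ H k, T v⟫ := by
    intro k
    simp [ketbra_apply, LinearMap.comp_apply, map_smul, inner_smul_right]
  simp_rw [h]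
  exact (stdOrthonormalBasis ℂ H).sum_inner_mul_inner v (T v)

lemma parseval {n : Type*} [Fintype n] (c : OrthonormalBasis n ℂ H) (x : H) :
    ∑ k, ‖⟪c k, x⟫‖ ^ 2 = ‖x‖ ^ 2 := by
  simp_rw [← OrthonormalBasis.repr_apply_apply]
  rw [← LinearIsometryEquiv.norm_map c.repr x]
  exact (PiLp.norm_sq_eq_of_L2 _ _).symm

lemma ketbra_isSymmetric (v : H) : (ketbra v).IsSymmetric := by
  intro x y
  simp only [ketbra_apply, inner_smul_left, inner_smul_right, inner_conj_symm]
  ring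

lemma comp_sum' {n : Type*} [Fintype n] (f : H →ₗ[ℂ] H) (g : n → (H →ₗ[ℂ] H)) :
    f ∘ₗ (∑ j, g j) = ∑ j, f ∘ₗ g j := by
  ext x; simp

lemma comp_smul' (f g : H →ₗ[ℂ] H) (c : ℂ) : f ∘ₗ (c • g) = c • (f ∘ₗ g) := by
  ext x; simp

lemma trace_comp_distOp (f : H →ₗ[ℂ] H) (a' : ι' → H) (b : ι → H) (i : ι) :
    LinearMap.trace ℂ H (f ∘ₗ distOp a' b i) =
      ⟪b i, f (b i)⟫ - ∑ j, (‖⟪a' j, b i⟫‖ ^ 2 : ℂ) * ⟪a' j, f (a' j)⟫ := by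
  rw [distOp, LinearMap.comp_sub, comp_sum', map_sub, map_sum, trace_comp_ketbra]
  congr 1
  refine Finset.sum_congr rfl fun j _ => ?_
  rw [comp_smul', map_smul, trace_comp_ketbra, smul_eq_mul]

lemma distOp_isSymmetric (a' : ι' → H) (b : ι → H) (i : ι) : (distOp a' b i).IsSymmetric := by
  intro x y
  simp only [distOp, LinearMap.sub_apply, LinearMap.coe_sum, Finset.sum_apply,
    LinearMap.smul_apply, inner_sub_left, inner_sub_right, sum_inner, inner_sum,
    inner_smul_left, inner_smul_right, map_pow, Complex.conj_ofReal,
    ketbra_isSymmetric (b i) x y]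
  congr 1
  refine Finset.sum_congr rfl fun j _ => ?_
  rw [ketbra_isSymmetric (a' j) x y]

lemma density_cauchySchwarz {ρ : H →ₗ[ℂ] H} (hsym : ρ.IsSymmetric)
    (hpos : ∀ x : H, 0 ≤ (⟪x, ρ x⟫).re) (x y : H) :
    ‖⟪x, ρ y⟫‖ ^ 2 ≤ (⟪x, ρ x⟫).re * (⟪y, ρ y⟫).re := by
  let c : PreInnerProductSpace.Core ℂ H :=
  { inner := fun u w => ⟪u, ρ w⟫
    conj_inner_symm := fun u w => by
      show (starRingEnd ℂ) ⟪w, ρ u⟫ = ⟪u, ρ w⟫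
      rw [inner_conj_symm, hsym]
    re_inner_nonneg := fun u => hpos u
    add_left := fun u w z => by
      show ⟪u + w, ρ z⟫ = ⟪u, ρ z⟫ + ⟪w, ρ z⟫
      rw [inner_add_left]
    smul_left := fun u w r => by
      show ⟪r • u, ρ w⟫ = (starRingEnd ℂ) r * ⟪u, ρ w⟫
      rw [inner_smul_left] }
  have h := @InnerProductSpace.Core.inner_mul_inner_self_le ℂ H _ _ _ c x y
  have hxy : ⟪y, ρ x⟫ = (starRingEnd ℂ) ⟪x, ρ y⟫ := by
    rw [inner_conj_symm, hsym]
  have h2 : ‖⟪x, ρ y⟫‖ * ‖⟪y, ρ x⟫‖ ≤ (⟪x, ρ x⟫).re * (⟪y, ρ y⟫).re := h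
  rw [hxy, RCLike.norm_conj, ← sq] at h2
  exact h2

lemma conj_mul_inner (x y : H) : ⟪y, x⟫ * ⟪x, y⟫ = ((‖⟪x, y⟫‖ : ℂ)) ^ 2 := by
  rw [← inner_conj_symm y x, mul_comm, Complex.mul_conj]
  norm_cast
  rw [Complex.normSq_eq_norm_sq]

lemma norm_sub_ofReal_sq (z : ℂ) (t : ℝ) : ‖z - (t : ℂ)‖ ^ 2 = ‖z‖ ^ 2 - 2 * t * z.re + t ^ 2 := by
  simp only [Complex.sq_norm, Complex.normSq_apply, Complex.sub_re,
    Complex.sub_im, Complex.ofReal_re, Complex.ofReal_im]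
  ring

lemma key {d : ℕ} (hd : 2 ≤ d) (a' b : OrthonormalBasis (Fin d) ℂ H)
    {ρ : H →ₗ[ℂ] H} (hρ : IsDensity ρ) (i : Fin d) :
    ‖LinearMap.trace ℂ H (ρ ∘ₗ distOp (⇑a') (⇑b) i)‖ ≤
      Real.sqrt ((1 - 1 / (d : ℝ)) * (1 - ∑ k : Fin d, ‖⟪a' k, b i⟫‖ ^ 4)) := by
  classical
  obtain ⟨hsym, hpos, htr⟩ := hρ
  have hd0 : (0 : ℝ) < d := by
    have : (2 : ℝ) ≤ d := by exact_mod_cast hd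
    linarith
  set p : Fin d → ℝ := fun j => ‖⟪a' j, b i⟫‖ ^ 2 with hp
  have hb : ∀ k l : Fin d, (⟪b k, b l⟫ : ℂ) = if k = l then 1 else 0 :=
    fun k l => orthonormal_iff_ite.mp b.orthonormal k l
  have ha : ∀ k l : Fin d, (⟪a' k, a' l⟫ : ℂ) = if k = l then 1 else 0 :=
    fun k l => orthonormal_iff_ite.mp a'.orthonormal k l
  have hpar : ∑ j, p j = 1 := by
    have h := parseval a' (b i)
    rwa [b.orthonormal.1 i, one_pow] at h
  set D : H →ₗ[ℂ] H := distOp (⇑a') (⇑b) i with hDdef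
  set R : Fin d → Fin d → ℂ := fun k l => ⟪b k, ρ (b l)⟫ with hR
  set Dm : Fin d → Fin d → ℂ := fun k l => ⟪b k, D (b l)⟫ with hDm
  set A : Fin d → Fin d → ℂ := fun k l => R k l - if k = l then (Complex.ofReal ((d : ℝ)⁻¹)) else 0 with hA
  -- trace of D is zero
  have htrD : LinearMap.trace ℂ H D = 0 := by
    have h := trace_comp_distOp (LinearMap.id) (⇑a') (⇑b) i
    rw [LinearMap.id_comp] at h
    rw [hDdef, h]
    simp only [LinearMap.id_apply, hb, ha, eq_self_iff_true, if_true, mul_one]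
    have : (∑ j, ((‖⟪a' j, b i⟫‖ : ℂ)) ^ 2) = ((∑ j, p j : ℝ) : ℂ) := by
      rw [hp]; push_cast; rfl
    rw [this, hpar]
    simp
  -- ⟪a' j, D (a' j)⟫ = 0
  have hDaj : ∀ j, ⟪a' j, D (a' j)⟫ = 0 := by
    intro j
    rw [hDdef]
    simp only [distOp, LinearMap.sub_apply, LinearMap.coe_sum, Finset.sum_apply,
      LinearMap.smul_apply, ketbra_apply, inner_sub_right, inner_sum, inner_smul_right]
    simp only [ha, mul_ite, ite_mul, mul_zero, zero_mul, mul_one, one_mul,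
      Finset.sum_ite_eq', Finset.mem_univ, if_true]
    rw [conj_mul_inner (a' j) (b i)]
    simp
  -- ⟪b i, D (b i)⟫ = 1 - ∑ p²
  have hDbi : ⟪b i, D (b i)⟫ = ((1 - ∑ j, (p j) ^ 2 : ℝ) : ℂ) := by
    rw [hDdef]
    simp only [distOp, LinearMap.sub_apply, LinearMap.coe_sum, Finset.sum_apply,
      LinearMap.smul_apply, ketbra_apply, inner_sub_right, inner_sum, inner_smul_right]
    simp only [hb, eq_self_iff_true, if_true, mul_one]
    have hterm : ∀ j, (‖⟪a' j, b i⟫‖ : ℂ) ^ 2 * (⟪a' j, b i⟫ * ⟪b i, a' j⟫) = ((p j ^ 2 : ℝ) : ℂ) := by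
      intro j
      rw [conj_mul_inner (b i) (a' j), norm_inner_symm (b i) (a' j), hp]
      push_cast
      ring
    simp only [hterm]
    push_cast
    ring
  have htrD2 : LinearMap.trace ℂ H (D ∘ₗ D) = ((1 - ∑ j, (p j) ^ 2 : ℝ) : ℂ) := by
    rw [hDdef, trace_comp_distOp, ← hDdef, hDbi]
    simp only [hDaj, mul_zero, Finset.sum_const_zero, sub_zero]
  -- matrix-element formula for the trace
  have hT : LinearMap.trace ℂ H (ρ ∘ₗ D) = ∑ k, ∑ l, Dm l k * R k l := by
    rw [trace_eq_sum_inner b]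
    have hterm : ∀ k, ⟪b k, (ρ ∘ₗ D) (b k)⟫ = ∑ l, Dm l k * R k l := by
      intro k
      conv_lhs => rw [LinearMap.comp_apply, ← b.sum_repr' (D (b k)), map_sum, inner_sum]
      refine Finset.sum_congr rfl fun l _ => ?_
      rw [map_smul, inner_smul_right]
    simp only [hterm]
  have hDtr0 : ∑ k, Dm k k = 0 := by
    simp only [hDm]
    rw [← trace_eq_sum_inner b D, htrD]
  have hT2 : LinearMap.trace ℂ H (ρ ∘ₗ D) = ∑ k, ∑ l, A k l * Dm l k := by
    rw [hT]
    have hsplit : ∀ k l : Fin d, A k l * Dm l k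
        = R k l * Dm l k - (if k = l then (Complex.ofReal ((d : ℝ)⁻¹)) else 0) * Dm l k := by
      intro k l; rw [hA]; ring
    have h3 : ∀ k, ∑ l, (if k = l then (Complex.ofReal ((d : ℝ)⁻¹)) else 0) * Dm l k
        = (Complex.ofReal ((d : ℝ)⁻¹)) * Dm k k := by
      intro k
      rw [Finset.sum_eq_single k]
      · rw [if_pos rfl]
      · intro l _ hl; rw [if_neg (Ne.symm hl), zero_mul]
      · intro hk; exact absurd (Finset.mem_univ k) hk
    have h2 : ∑ k, ∑ l, (if k = l then (Complex.ofReal ((d : ℝ)⁻¹)) else 0) * Dm l k = 0 := by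
      simp only [h3]
      rw [← Finset.mul_sum, hDtr0, mul_zero]
    simp only [hsplit]
    rw [Finset.sum_congr rfl fun k (_ : k ∈ Finset.univ) => Finset.sum_sub_distrib _ _,
      Finset.sum_sub_distrib, h2, sub_zero]
    exact Finset.sum_congr rfl fun k _ => Finset.sum_congr rfl fun l _ => mul_comm _ _
  set SA : ℝ := ∑ k, ∑ l, ‖A k l‖ ^ 2 with hSA
  set SD : ℝ := ∑ k, ∑ l, ‖Dm k l‖ ^ 2 with hSD
  have hCS : ‖LinearMap.trace ℂ H (ρ ∘ₗ D)‖ ≤ Real.sqrt SA * Real.sqrt SD := by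
    rw [hT2]
    calc ‖∑ k, ∑ l, A k l * Dm l k‖ ≤ ∑ k, ∑ l, ‖A k l * Dm l k‖ :=
          (norm_sum_le _ _).trans (Finset.sum_le_sum fun k _ => norm_sum_le _ _)
      _ = ∑ k, ∑ l, ‖A k l‖ * ‖Dm l k‖ := by simp [norm_mul]
      _ = ∑ x : Fin d × Fin d, ‖A x.1 x.2‖ * ‖Dm x.2 x.1‖ := by
          rw [Fintype.sum_prod_type]
      _ ≤ Real.sqrt (∑ x : Fin d × Fin d, ‖A x.1 x.2‖ ^ 2) *
            Real.sqrt (∑ x : Fin d × Fin d, ‖Dm x.2 x.1‖ ^ 2) := by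
          have := Real.sum_mul_le_sqrt_mul_sqrt (Finset.univ : Finset (Fin d × Fin d))
            (fun x => ‖A x.1 x.2‖) (fun x => ‖Dm x.2 x.1‖)
          simpa using this
      _ = Real.sqrt SA * Real.sqrt SD := by
          congr 1
          · rw [hSA, Fintype.sum_prod_type]
          · rw [hSD, Fintype.sum_prod_type]
            congr 1
            exact Finset.sum_comm
  have hRe : ∑ k, (R k k).re = 1 := by
    have h1 : ∑ k, R k k = 1 := by
      simp only [hR]; rw [← trace_eq_sum_inner b ρ, htr]
    have h2 := congrArg Complex.re h1
    rwa [Complex.re_sum] at h2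
  have hRsum : ∑ k, ∑ l, ‖R k l‖ ^ 2 ≤ 1 := by
    have hcs : ∀ k l : Fin d, ‖R k l‖ ^ 2 ≤ (R k k).re * (R l l).re := fun k l =>
      density_cauchySchwarz hsym hpos (b k) (b l)
    calc ∑ k, ∑ l, ‖R k l‖ ^ 2 ≤ ∑ k, ∑ l, (R k k).re * (R l l).re :=
          Finset.sum_le_sum fun k _ => Finset.sum_le_sum fun l _ => hcs k l
      _ = (∑ k, (R k k).re) * (∑ l, (R l l).re) := (Finset.sum_mul_sum _ _ _ _).symm
      _ = 1 := by rw [hRe, one_mul]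
  have hAle : SA ≤ 1 - (d : ℝ)⁻¹ := by
    have hterm : ∀ k l : Fin d, ‖A k l‖ ^ 2 = ‖R k l‖ ^ 2 +
        (if k = l then (-(2 * (d : ℝ)⁻¹ * (R k l).re) + ((d : ℝ)⁻¹) ^ 2) else 0) := by
      intro k l
      rcases eq_or_ne k l with h | h
      · subst h
        have hAkk : A k k = R k k - Complex.ofReal ((d : ℝ)⁻¹) := by
          rw [hA]; simp
        rw [hAkk, if_pos rfl, norm_sub_ofReal_sq (R k k) ((d : ℝ)⁻¹)]
        ring
      · simp [hA, h]
    have h4 : ∀ k, (∑ l, if k = l then (-(2 * (d : ℝ)⁻¹ * (R k l).re) + ((d : ℝ)⁻¹) ^ 2) else 0)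
        = -(2 * (d : ℝ)⁻¹ * (R k k).re) + ((d : ℝ)⁻¹) ^ 2 := by
      intro k
      rw [Finset.sum_eq_single k]
      · rw [if_pos rfl]
      · intro l _ hl; rw [if_neg (Ne.symm hl)]
      · intro hk; exact absurd (Finset.mem_univ k) hk
    have e1 : SA = (∑ k, ∑ l, ‖R k l‖ ^ 2)
        + (-(2 * (d : ℝ)⁻¹ * (∑ k, (R k k).re)) + d * ((d : ℝ)⁻¹) ^ 2) := by
      rw [hSA]
      simp only [hterm]
      rw [Finset.sum_congr rfl fun k (_ : k ∈ Finset.univ) => Finset.sum_add_distrib,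
        Finset.sum_add_distrib]
      congr 1
      simp only [h4]
      calc ∑ k : Fin d, (-(2 * (d : ℝ)⁻¹ * (R k k).re) + ((d : ℝ)⁻¹) ^ 2)
          = ∑ k : Fin d, ((-(2 * (d : ℝ)⁻¹)) * (R k k).re + ((d : ℝ)⁻¹) ^ 2) :=
            Finset.sum_congr rfl fun k _ => by ring
        _ = (-(2 * (d : ℝ)⁻¹)) * (∑ k, (R k k).re) + d * ((d : ℝ)⁻¹) ^ 2 := by
            rw [Finset.sum_add_distrib, ← Finset.mul_sum, Finset.sum_const,
              Finset.card_univ, Fintype.card_fin, nsmul_eq_mul]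
        _ = -(2 * (d : ℝ)⁻¹ * (∑ k, (R k k).re)) + d * ((d : ℝ)⁻¹) ^ 2 := by ring
    have hd0' : (d : ℝ) ≠ 0 := ne_of_gt hd0
    have hinv : (d : ℝ) * ((d : ℝ)⁻¹) ^ 2 = (d : ℝ)⁻¹ := by
      rw [pow_two, ← mul_assoc, mul_inv_cancel₀ hd0', one_mul]
    rw [e1, hRe, hinv]
    linarith [hRsum]
  have hSDval : SD = 1 - ∑ j, (p j) ^ 2 := by
    rw [hSD, Finset.sum_comm]
    have hcol : ∀ l, ∑ k, ‖Dm k l‖ ^ 2 = ‖D (b l)‖ ^ 2 := by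
      intro l; simp only [hDm]; exact parseval b (D (b l))
    simp only [hcol]
    have hns : ∀ l, (‖D (b l)‖ : ℝ) ^ 2 = (⟪b l, (D ∘ₗ D) (b l)⟫).re := by
      intro l
      have hsymD := distOp_isSymmetric (⇑a') (⇑b) i
      rw [LinearMap.comp_apply]
      rw [hDdef] at *
      rw [← hsymD (b l) (distOp (⇑a') (⇑b) i (b l))]
      rw [← inner_self_eq_norm_sq (𝕜 := ℂ)]
      simp [RCLike.re_to_complex]
    simp only [hns]
    rw [← Complex.re_sum, ← trace_eq_sum_inner b (D ∘ₗ D), htrD2, Complex.ofReal_re]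
  have h1d : (0 : ℝ) ≤ 1 - (d : ℝ)⁻¹ := by
    have h2' : (2 : ℝ) ≤ d := by exact_mod_cast hd
    have h2 : (1 : ℝ) ≤ d := by linarith
    have h3 : (d : ℝ)⁻¹ ≤ 1 := inv_le_one_of_one_le₀ h2
    linarith
  have hp4 : ∑ k, ‖⟪a' k, b i⟫‖ ^ 4 = ∑ j, (p j) ^ 2 :=
    Finset.sum_congr rfl fun k _ => by rw [hp]; ring
  calc ‖LinearMap.trace ℂ H (ρ ∘ₗ D)‖ ≤ Real.sqrt SA * Real.sqrt SD := hCS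
    _ ≤ Real.sqrt (1 - (d : ℝ)⁻¹) * Real.sqrt SD :=
        mul_le_mul_of_nonneg_right (Real.sqrt_le_sqrt hAle) (Real.sqrt_nonneg _)
    _ = Real.sqrt ((1 - (d : ℝ)⁻¹) * (1 - ∑ j, (p j) ^ 2)) := by
        rw [hSDval, ← Real.sqrt_mul h1d]
    _ = Real.sqrt ((1 - 1 / (d : ℝ)) * (1 - ∑ k, ‖⟪a' k, b i⟫‖ ^ 4)) := by
        rw [hp4, one_div]

lemma trace_ketbra (v : H) : LinearMap.trace ℂ H (ketbra v) = ⟪v, v⟫ := by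
  have h := trace_comp_ketbra (LinearMap.id) v
  rwa [LinearMap.id_comp, LinearMap.id_apply] at h

lemma ketbra_isDensity (v : H) (hv : ‖v‖ = 1) : IsDensity (ketbra v) := by
  refine ⟨ketbra_isSymmetric v, fun x => ?_, ?_⟩
  · have : ⟪x, ketbra v x⟫ = ((‖⟪x, v⟫‖ : ℂ)) ^ 2 := by
      rw [ketbra_apply, inner_smul_right, conj_mul_inner x v]
    rw [this]
    norm_cast
    positivity
  · rw [trace_ketbra, inner_self_eq_norm_sq_to_K, hv]
    norm_num

/-- upper bound for the disturbance via the calibration disturbance. -/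
theorem disturbance_upper_bound_one {d : ℕ} (hd : 2 ≤ d)
    (a' b : OrthonormalBasis (Fin d) ℂ H) :
    siDist (⇑a') (⇑b) ≤ ⨆ i : Fin d,
      Real.sqrt ((1 - 1 / (d : ℝ)) * (1 - ∑ k : Fin d, ‖⟪a' k, b i⟫‖ ^ 4)) := by
  haveI hne : Nonempty (Fin d) := ⟨⟨0, by omega⟩⟩
  haveI : Nonempty {ρ : H →ₗ[ℂ] H // IsDensity ρ} :=
    ⟨⟨ketbra (b ⟨0, by omega⟩), ketbra_isDensity _ (b.orthonormal.1 _)⟩⟩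
  rw [siDist]
  refine ciSup_le fun ρ => ?_
  rw [sdDist]
  refine ciSup_le fun i => ?_
  refine le_trans (key hd a' b ρ.2 i) (le_ciSup (f := fun i : Fin d =>
    Real.sqrt ((1 - 1 / (d : ℝ)) * (1 - ∑ k : Fin d, ‖⟪a' k, b i⟫‖ ^ 4))) ?_ i)
  exact Set.Finite.bddAbove (Set.finite_range _)
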